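/- Fix $n \geq c_\ell \geq \cdots \geq c_1 \geq 1$ and nonnegative integers $T_\ell,\ldots,T_1$, and let $\mu$ be a partition with $n$ distinct parts. Then $\sum_{\Lambda \text{ bad}} \sum_{\sigma \in S_n} \mathrm{sgn}(\sigma)\, x_{\sigma(1)}^{\lambda_1}\cdots x_{\sigma(n)}^{\lambda_n} = 0$, where the outer sum is over all bad $\mathbf{T}$-extensions $\Lambda$ of $\mu$ (with largest composition $\lambda$). That is, the contributions of bad $\mathbf{T}$-extensions to the alternating sum cancel. -/

import Mathlib

open Finset MvPolynomial

/-- `IsTExt n ℓ μ c T Λ` : `Λ` is a `T`-extension of `μ`, i.e. `Λ 0 = μ` and, for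
each step `h` (0-indexed; `Λ h.castSucc = λ^h`, `Λ h.succ = λ^{h+1}` in the paper's
1-indexed notation), we have componentwise containment `λ^{h} ⊆ λ^{h+1}`, total
increase `T h`, and equality in coordinates `k` with `k > c_h` (1-indexed), i.e.
0-indexed coordinates `i` with `c h ≤ i`. -/
def IsTExt (n ℓ : ℕ) (μ : Fin n → ℕ) (c T : Fin ℓ → ℕ)
    (Λ : Fin (ℓ + 1) → Fin n → ℕ) : Prop :=
  Λ 0 = μ ∧
  ∀ h : Fin ℓ,
    (∀ i, Λ h.castSucc i ≤ Λ h.succ i) ∧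
    ((∑ i, Λ h.succ i) = (∑ i, Λ h.castSucc i) + T h) ∧
    (∀ i : Fin n, c h ≤ (i : ℕ) → Λ h.succ i = Λ h.castSucc i)

/-- A `T`-extension is bad if for some `h` there is `2 ≤ k ≤ c_h` (1-indexed) with
`λ^{h+1}_k ≥ λ^{h}_{k-1}`; 0-indexed: adjacent `j, k : Fin n` with `j+1 = k`,
`k+1 ≤ c h`, and `Λ h.succ k ≥ Λ h.castSucc j`. -/
def IsBadTExt (n ℓ : ℕ) (μ : Fin n → ℕ) (c T : Fin ℓ → ℕ)
    (Λ : Fin (ℓ + 1) → Fin n → ℕ) : Prop :=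
  IsTExt n ℓ μ c T Λ ∧
  ∃ h : Fin ℓ, ∃ j k : Fin n, (j : ℕ) + 1 = (k : ℕ) ∧ (k : ℕ) + 1 ≤ c h ∧
    Λ h.castSucc j ≤ Λ h.succ k

/-- A violation at step `m` (0-indexed) in column `kv` (0-indexed). -/
def Viol (n ℓ : ℕ) (c : Fin ℓ → ℕ) (Λ : Fin (ℓ + 1) → Fin n → ℕ) (m kv : ℕ) : Prop :=
  ∃ (hm : m < ℓ) (hk : kv < n) (j : Fin n), (j : ℕ) + 1 = kv ∧ kv + 1 ≤ c ⟨m, hm⟩ ∧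
    Λ (Fin.castSucc ⟨m, hm⟩) j ≤ Λ (Fin.succ ⟨m, hm⟩) ⟨kv, hk⟩

open Classical in
noncomputable def selM (n ℓ : ℕ) (c : Fin ℓ → ℕ) (Λ : Fin (ℓ + 1) → Fin n → ℕ) : ℕ :=
  if hb : ∃ m kv, Viol n ℓ c Λ m kv then Nat.find hb else 0

open Classical in
noncomputable def selK (n ℓ : ℕ) (c : Fin ℓ → ℕ) (Λ : Fin (ℓ + 1) → Fin n → ℕ) : ℕ :=
  Nat.findGreatest (fun kv => Viol n ℓ c Λ (selM n ℓ c Λ) kv) n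

/-- Swap columns `k0-1` and `k0` in all rows strictly above `m0`. -/
def swapF (n ℓ : ℕ) (m0 k0 : ℕ) (hk0 : k0 < n) (Λ : Fin (ℓ + 1) → Fin n → ℕ) :
    Fin (ℓ + 1) → Fin n → ℕ :=
  fun g i => if m0 < (g : ℕ) then
    Λ g (Equiv.swap ⟨k0 - 1, Nat.lt_of_le_of_lt (Nat.sub_le _ _) hk0⟩ ⟨k0, hk0⟩ i)
  else Λ g i

lemma swapF_swapF (n ℓ : ℕ) (m0 k0 : ℕ) (hk0 : k0 < n) (Λ : Fin (ℓ + 1) → Fin n → ℕ) :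
    swapF n ℓ m0 k0 hk0 (swapF n ℓ m0 k0 hk0 Λ) = Λ := by
  funext g i
  simp only [swapF]
  by_cases hg : m0 < (g : ℕ) <;> simp [hg, Equiv.swap_apply_self]

open Classical in
noncomputable def FF (n ℓ : ℕ) (c : Fin ℓ → ℕ) (Λ : Fin (ℓ + 1) → Fin n → ℕ) :
    Fin (ℓ + 1) → Fin n → ℕ :=
  fun g i =>
    if h : selM n ℓ c Λ < (g : ℕ) ∧ selK n ℓ c Λ < n then
      Λ g (Equiv.swap ⟨selK n ℓ c Λ - 1, Nat.lt_of_le_of_lt (Nat.sub_le _ _) h.2⟩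
        ⟨selK n ℓ c Λ, h.2⟩ i)
    else Λ g i

lemma FF_eq (n ℓ : ℕ) (c : Fin ℓ → ℕ) (Λ : Fin (ℓ + 1) → Fin n → ℕ)
    {m0 k0 : ℕ} (hm : selM n ℓ c Λ = m0) (hk : selK n ℓ c Λ = k0) (hk0 : k0 < n) :
    FF n ℓ c Λ = swapF n ℓ m0 k0 hk0 Λ := by
  subst hm hk
  funext g i
  simp only [FF, swapF]
  by_cases hg : selM n ℓ c Λ < (g : ℕ)
  · rw [dif_pos ⟨hg, hk0⟩, if_pos hg]
  · rw [dif_neg (by tauto), if_neg hg]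

section ExtFacts

variable {n ℓ : ℕ} {μ : Fin n → ℕ} {c T : Fin ℓ → ℕ} {Λ : Fin (ℓ + 1) → Fin n → ℕ}

lemma ext_mono (hext : IsTExt n ℓ μ c T Λ) :
    ∀ (b : ℕ) (hb : b ≤ ℓ) (a : ℕ) (hab : a ≤ b) (i : Fin n),
      Λ ⟨a, Nat.lt_succ_of_le (le_trans hab hb)⟩ i ≤ Λ ⟨b, Nat.lt_succ_of_le hb⟩ i := by
  intro b
  induction b with
  | zero =>
    intro hb a hab i
    have : a = 0 := Nat.le_zero.mp hab
    subst this; exact le_rfl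
  | succ b ih =>
    intro hb a hab i
    rcases Nat.lt_succ_iff_lt_or_eq.mp (Nat.lt_succ_of_le hab) with h | h
    · exact le_trans (ih (le_trans (Nat.le_succ b) hb) a (Nat.lt_succ_iff.mp h) i)
        ((hext.2 ⟨b, hb⟩).1 i)
    · subst h; exact le_rfl

lemma ext_ge_mu (hext : IsTExt n ℓ μ c T Λ) (m : ℕ) (hm : m ≤ ℓ) (i : Fin n) :
    μ i ≤ Λ ⟨m, Nat.lt_succ_of_le hm⟩ i := by
  have h0 := ext_mono hext m hm 0 (Nat.zero_le _) i
  have : Λ (⟨0, Nat.lt_succ_of_le (le_trans (Nat.zero_le _) hm)⟩ : Fin (ℓ + 1)) i = μ i := by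
    rw [show (⟨0, Nat.lt_succ_of_le (le_trans (Nat.zero_le _) hm)⟩ : Fin (ℓ + 1)) = 0 from rfl,
      hext.1]
  omega

lemma ext_sum_le (hext : IsTExt n ℓ μ c T Λ) (m : ℕ) (hm : m ≤ ℓ) :
    (∑ i, Λ ⟨m, Nat.lt_succ_of_le hm⟩ i) ≤ (∑ i, μ i) + ∑ h, T h := by
  have key : ∀ (m : ℕ) (hm : m ≤ ℓ),
      (∑ i, Λ ⟨m, Nat.lt_succ_of_le hm⟩ i)
        = (∑ i, μ i) + ∑ h : Fin ℓ, if (h : ℕ) < m then T h else 0 := by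
    intro m
    induction m with
    | zero =>
      intro hm
      simp [show (⟨0, Nat.lt_succ_of_le hm⟩ : Fin (ℓ + 1)) = 0 from rfl, hext.1]
    | succ m ih =>
      intro hm
      have hm' : m < ℓ := hm
      have hsum := (hext.2 ⟨m, hm'⟩).2.1
      have e1 : (∑ i, Λ ⟨m + 1, Nat.lt_succ_of_le hm⟩ i)
          = (∑ i, Λ ⟨m, Nat.lt_succ_of_le (le_of_lt hm')⟩ i) + T ⟨m, hm'⟩ := hsum
      rw [e1, ih (le_of_lt hm')]
      have e2 : ∀ h : Fin ℓ, (if (h : ℕ) < m + 1 then T h else 0)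
          = (if (h : ℕ) < m then T h else 0) + (if h = ⟨m, hm'⟩ then T h else 0) := by
        intro h
        by_cases h2 : h = ⟨m, hm'⟩
        · subst h2; simp
        · have hne : (h : ℕ) ≠ m := fun hh => h2 (Fin.ext hh)
          by_cases h1 : (h : ℕ) < m
          · rw [if_pos (by omega), if_pos h1, if_neg h2, add_zero]
          · rw [if_neg (by omega), if_neg h1, if_neg h2, add_zero]
      rw [Finset.sum_congr rfl fun h _ => e2 h, Finset.sum_add_distrib,
        Finset.sum_ite_eq' Finset.univ (⟨m, hm'⟩ : Fin ℓ) T]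
      simp [add_assoc]
  rw [key m hm]
  exact Nat.add_le_add_left (Finset.sum_le_sum fun h _ => by split <;> simp) _

lemma ext_sdec (hμ : ∀ i j : Fin n, i < j → μ j < μ i) (hext : IsTExt n ℓ μ c T Λ) :
    ∀ (m : ℕ) (hm : m ≤ ℓ),
      (∀ m' kv, m' < m → ¬ Viol n ℓ c Λ m' kv) →
      ∀ j k : Fin n, (j : ℕ) + 1 = (k : ℕ) →
        Λ ⟨m, Nat.lt_succ_of_le hm⟩ k < Λ ⟨m, Nat.lt_succ_of_le hm⟩ j := by
  intro m
  induction m with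
  | zero =>
    intro hm _ j k hjk
    have h0 : (⟨0, Nat.lt_succ_of_le hm⟩ : Fin (ℓ + 1)) = 0 := rfl
    rw [h0, hext.1]
    exact hμ j k (by exact Fin.lt_def.mpr (by omega))
  | succ m ih =>
    intro hm hnov j k hjk
    have hm' : m < ℓ := hm
    have hih := ih (le_of_lt hm') (fun m' kv hlt => hnov m' kv (Nat.lt_succ_of_lt hlt)) j k hjk
    have hcont := (hext.2 ⟨m, hm'⟩).1
    by_cases hc : (k : ℕ) + 1 ≤ c ⟨m, hm'⟩
    · have hnv := hnov m (k : ℕ) (Nat.lt_succ_self m)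
      simp only [Viol, not_exists] at hnv
      have hlt : ¬ (Λ (Fin.castSucc ⟨m, hm'⟩) j ≤ Λ (Fin.succ ⟨m, hm'⟩) ⟨(k : ℕ), k.isLt⟩) := by
        intro hle
        exact hnv hm' k.isLt j ⟨hjk, hc, hle⟩
      push_neg at hlt
      have e1 : Λ (Fin.succ ⟨m, hm'⟩) ⟨(k : ℕ), k.isLt⟩
          = Λ ⟨m + 1, Nat.lt_succ_of_le hm⟩ k := rfl
      have e2 : Λ (Fin.castSucc ⟨m, hm'⟩) j = Λ ⟨m, Nat.lt_succ_of_le (le_of_lt hm')⟩ j := rfl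
      calc Λ ⟨m + 1, Nat.lt_succ_of_le hm⟩ k < Λ ⟨m, Nat.lt_succ_of_le (le_of_lt hm')⟩ j := by
            rw [← e1, ← e2]; exact hlt
        _ ≤ Λ ⟨m + 1, Nat.lt_succ_of_le hm⟩ j := hcont j
    · have hfr := (hext.2 ⟨m, hm'⟩).2.2 k (by omega)
      calc Λ ⟨m + 1, Nat.lt_succ_of_le hm⟩ k
          = Λ ⟨m, Nat.lt_succ_of_le (le_of_lt hm')⟩ k := hfr
        _ < Λ ⟨m, Nat.lt_succ_of_le (le_of_lt hm')⟩ j := hih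
        _ ≤ Λ ⟨m + 1, Nat.lt_succ_of_le hm⟩ j := hcont j

end ExtFacts

section Sel

variable {n ℓ : ℕ} {c : Fin ℓ → ℕ} {Λ : Fin (ℓ + 1) → Fin n → ℕ}

lemma selM_spec (hb : ∃ m kv, Viol n ℓ c Λ m kv) :
    (∃ kv, Viol n ℓ c Λ (selM n ℓ c Λ) kv) ∧
      ∀ m < selM n ℓ c Λ, ¬∃ kv, Viol n ℓ c Λ m kv := by
  classical
  rw [selM, dif_pos hb]
  exact ⟨Nat.find_spec hb, fun m hm => Nat.find_min hb hm⟩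

lemma selM_eq (hb : ∃ m kv, Viol n ℓ c Λ m kv) (m0 : ℕ)
    (h1 : ∃ kv, Viol n ℓ c Λ m0 kv) (h2 : ∀ m < m0, ¬∃ kv, Viol n ℓ c Λ m kv) :
    selM n ℓ c Λ = m0 := by
  classical
  rw [selM, dif_pos hb]
  exact (Nat.find_eq_iff hb).mpr ⟨h1, h2⟩

lemma selK_spec (hb : ∃ m kv, Viol n ℓ c Λ m kv) :
    Viol n ℓ c Λ (selM n ℓ c Λ) (selK n ℓ c Λ) ∧
      ∀ kv, selK n ℓ c Λ < kv → ¬Viol n ℓ c Λ (selM n ℓ c Λ) kv := by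
  classical
  obtain ⟨kv, hv⟩ := (selM_spec hb).1
  have hk : kv < n := by obtain ⟨_, hk, _⟩ := hv; exact hk
  constructor
  · exact Nat.findGreatest_spec (le_of_lt hk) hv
  · intro kv' hlt hv'
    have hk' : kv' < n := by obtain ⟨_, hk', _⟩ := hv'; exact hk'
    exact Nat.findGreatest_is_greatest hlt (le_of_lt hk') hv'

lemma selK_eq (hb : ∃ m kv, Viol n ℓ c Λ m kv) (k0 : ℕ)
    (h1 : Viol n ℓ c Λ (selM n ℓ c Λ) k0)
    (h2 : ∀ kv, k0 < kv → ¬Viol n ℓ c Λ (selM n ℓ c Λ) kv) :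
    selK n ℓ c Λ = k0 := by
  classical
  have hk : k0 < n := by obtain ⟨_, hk, _⟩ := h1; exact hk
  refine le_antisymm ?_ (Nat.le_findGreatest (le_of_lt hk) h1)
  by_contra hlt
  exact h2 _ (lt_of_not_ge hlt) (selK_spec hb).1

end Sel

lemma main_key (n ℓ : ℕ) (μ : Fin n → ℕ) (hμ : ∀ i j : Fin n, i < j → μ j < μ i)
    (c T : Fin ℓ → ℕ) (hmono : ∀ h h' : Fin ℓ, h ≤ h' → c h ≤ c h')
    (Λ : Fin (ℓ + 1) → Fin n → ℕ)
    (hbox : ∀ g i, Λ g i ≤ μ i + ∑ h, T h)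
    (hbad : IsBadTExt n ℓ μ c T Λ) :
    ∃ (m0 k0 : ℕ) (hk0 : k0 < n),
      selM n ℓ c Λ = m0 ∧ selK n ℓ c Λ = k0 ∧ 0 < k0 ∧ m0 < ℓ ∧
      (∀ g i, swapF n ℓ m0 k0 hk0 Λ g i ≤ μ i + ∑ h, T h) ∧
      IsBadTExt n ℓ μ c T (swapF n ℓ m0 k0 hk0 Λ) ∧
      selM n ℓ c (swapF n ℓ m0 k0 hk0 Λ) = m0 ∧
      selK n ℓ c (swapF n ℓ m0 k0 hk0 Λ) = k0 := by
  classical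
  obtain ⟨hext, hB, jB, kB, hjkB, hkcB, hleB⟩ := hbad
  have hb : ∃ m kv, Viol n ℓ c Λ m kv :=
    ⟨(hB : ℕ), (kB : ℕ), hB.isLt, kB.isLt, jB, hjkB, hkcB, hleB⟩
  obtain ⟨hv, hmax⟩ := selK_spec hb
  have hmin := (selM_spec hb).2
  set m0 := selM n ℓ c Λ with hm0def
  set k0 := selK n ℓ c Λ with hk0def
  obtain ⟨hm0ℓ, hk0n, j0, hj0, hck0, hle0⟩ := hv
  have hk0pos : 0 < k0 := by omega
  set jF : Fin n := ⟨k0 - 1, Nat.lt_of_le_of_lt (Nat.sub_le _ _) hk0n⟩ with hjFdef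
  set kF : Fin n := ⟨k0, hk0n⟩ with hkFdef
  have hjFval : (jF : ℕ) = k0 - 1 := rfl
  have hkFval : (kF : ℕ) = k0 := rfl
  have hj0F : j0 = jF := Fin.ext (by omega)
  rw [hj0F] at hle0 hj0
  have hjkF : (jF : ℕ) + 1 = (kF : ℕ) := by omega
  have hjFk : jF ≠ kF := Fin.ne_of_val_ne (by omega)
  set Λ' := swapF n ℓ m0 k0 hk0n Λ with hΛ'def
  have F1 : ∀ g : Fin (ℓ + 1), (g : ℕ) ≤ m0 → ∀ i, Λ' g i = Λ g i := by
    intro g hg i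
    simp only [hΛ'def, swapF]
    rw [if_neg (by omega)]
  have F2 : ∀ g : Fin (ℓ + 1), m0 < (g : ℕ) → ∀ i, Λ' g i = Λ g (Equiv.swap jF kF i) := by
    intro g hg i
    simp only [hΛ'def, swapF]
    rw [if_pos hg]
  have hsd : ∀ a b : Fin n, (a : ℕ) + 1 = (b : ℕ) →
      Λ (Fin.castSucc ⟨m0, hm0ℓ⟩) b < Λ (Fin.castSucc ⟨m0, hm0ℓ⟩) a := by
    intro a b hab
    exact ext_sdec hμ hext m0 (le_of_lt hm0ℓ)
      (fun m' kv hlt hviol => hmin m' hlt ⟨kv, hviol⟩) a b hab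
  -- IsTExt Λ'
  have hext' : IsTExt n ℓ μ c T Λ' := by
    constructor
    · funext i
      rw [F1 0 (Nat.zero_le m0) i]
      exact congrFun hext.1 i
    · intro h'
      rcases Nat.lt_trichotomy (h' : ℕ) m0 with hA | hA | hA
      · have e1 : ∀ i, Λ' h'.castSucc i = Λ h'.castSucc i :=
          F1 _ (by rw [Fin.coe_castSucc]; omega)
        have e2 : ∀ i, Λ' h'.succ i = Λ h'.succ i :=
          F1 _ (by rw [Fin.val_succ]; omega)
        exact ⟨fun i => by rw [e1, e2]; exact (hext.2 h').1 i,
          by simp only [e1, e2]; exact (hext.2 h').2.1,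
          fun i hi => by rw [e1, e2]; exact (hext.2 h').2.2 i hi⟩
      · have hh' : h' = ⟨m0, hA ▸ h'.isLt⟩ := Fin.ext hA
        have hm0ℓ' : m0 < ℓ := hm0ℓ
        rw [hh']
        have e1 : ∀ i, Λ' (Fin.castSucc ⟨m0, hm0ℓ'⟩) i = Λ (Fin.castSucc ⟨m0, hm0ℓ'⟩) i :=
          F1 _ (le_refl m0)
        have e2 : ∀ i, Λ' (Fin.succ ⟨m0, hm0ℓ'⟩) i
            = Λ (Fin.succ ⟨m0, hm0ℓ'⟩) (Equiv.swap jF kF i) :=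
          F2 _ (Nat.lt_succ_self m0)
        refine ⟨fun i => ?_, ?_, fun i hi => ?_⟩
        · rw [e1, e2]
          rcases eq_or_ne i jF with rfl | hij
          · rw [Equiv.swap_apply_left]
            exact hle0
          rcases eq_or_ne i kF with rfl | hik
          · rw [Equiv.swap_apply_right]
            have h1 := hsd jF kF hjkF
            have h2 := (hext.2 ⟨m0, hm0ℓ'⟩).1 jF
            omega
          · rw [Equiv.swap_apply_of_ne_of_ne hij hik]
            exact (hext.2 ⟨m0, hm0ℓ'⟩).1 i
        · simp only [e1, e2]
          rw [show (∑ i, Λ (Fin.succ ⟨m0, hm0ℓ'⟩) (Equiv.swap jF kF i))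
              = ∑ i, Λ (Fin.succ ⟨m0, hm0ℓ'⟩) i from Equiv.sum_comp _ _]
          exact (hext.2 ⟨m0, hm0ℓ'⟩).2.1
        · rw [e1, e2, Equiv.swap_apply_of_ne_of_ne
            (Fin.ne_of_val_ne (by omega)) (Fin.ne_of_val_ne (by omega))]
          exact (hext.2 ⟨m0, hm0ℓ'⟩).2.2 i hi
      · have e1 : ∀ i, Λ' h'.castSucc i = Λ h'.castSucc (Equiv.swap jF kF i) :=
          F2 _ (by rw [Fin.coe_castSucc]; omega)
        have e2 : ∀ i, Λ' h'.succ i = Λ h'.succ (Equiv.swap jF kF i) :=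
          F2 _ (by rw [Fin.val_succ]; omega)
        refine ⟨fun i => ?_, ?_, fun i hi => ?_⟩
        · rw [e1, e2]; exact (hext.2 h').1 _
        · simp only [e1, e2]
          rw [show (∑ i, Λ h'.succ (Equiv.swap jF kF i)) = ∑ i, Λ h'.succ i from
              Equiv.sum_comp _ _,
            show (∑ i, Λ h'.castSucc (Equiv.swap jF kF i)) = ∑ i, Λ h'.castSucc i from
              Equiv.sum_comp _ _]
          exact (hext.2 h').2.1
        · have hcc : c ⟨m0, hm0ℓ⟩ ≤ c h' := hmono _ _ (by rw [Fin.le_def]; exact le_of_lt hA)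
          have hki : k0 < (i : ℕ) := by omega
          rw [e1, e2, Equiv.swap_apply_of_ne_of_ne
            (Fin.ne_of_val_ne (by omega)) (Fin.ne_of_val_ne (by omega))]
          exact (hext.2 h').2.2 i hi
  -- box bounds for Λ'
  have hbox' : ∀ g i, Λ' g i ≤ μ i + ∑ h, T h := by
    intro g i
    by_cases hg : m0 < (g : ℕ)
    · rw [F2 g hg i]
      rcases eq_or_ne i jF with rfl | hij
      · rw [Equiv.swap_apply_left]
        have h1 := hbox g kF
        have h2 := hμ jF kF (Fin.lt_def.mpr (by omega))
        omega
      rcases eq_or_ne i kF with rfl | hik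
      · rw [Equiv.swap_apply_right]
        have hgl : (g : ℕ) ≤ ℓ := Nat.lt_succ_iff.mp g.isLt
        have hsum' : (∑ x, Λ g x) ≤ (∑ x, μ x) + ∑ h, T h := ext_sum_le hext g.val hgl
        have hkj : μ jF ≤ Λ g kF := by
          have h1 : μ jF ≤ Λ (Fin.castSucc ⟨m0, hm0ℓ⟩) jF :=
            ext_ge_mu hext m0 (le_of_lt hm0ℓ) jF
          have h2 : Λ (Fin.succ ⟨m0, hm0ℓ⟩) kF ≤ Λ g kF :=
            ext_mono hext g.val hgl (m0 + 1) hg kF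
          omega
        have hmemk : kF ∈ Finset.univ.erase jF :=
          Finset.mem_erase.mpr ⟨fun hh => hjFk hh.symm, Finset.mem_univ _⟩
        have hdecΛ : (∑ x, Λ g x)
            = Λ g jF + (Λ g kF + ∑ x ∈ (Finset.univ.erase jF).erase kF, Λ g x) := by
          rw [Finset.add_sum_erase _ (Λ g) hmemk, Finset.add_sum_erase _ (Λ g) (Finset.mem_univ jF)]
        have hdecμ : (∑ x, μ x)
            = μ jF + (μ kF + ∑ x ∈ (Finset.univ.erase jF).erase kF, μ x) := by
          rw [Finset.add_sum_erase _ μ hmemk, Finset.add_sum_erase _ μ (Finset.mem_univ jF)]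
        have hrest : (∑ x ∈ (Finset.univ.erase jF).erase kF, μ x)
            ≤ ∑ x ∈ (Finset.univ.erase jF).erase kF, Λ g x :=
          Finset.sum_le_sum fun x _ => ext_ge_mu hext g.val hgl x
        omega
      · rw [Equiv.swap_apply_of_ne_of_ne hij hik]
        exact hbox g i
    · rw [F1 g (by omega) i]
      exact hbox g i
  -- Λ' has a violation at (m0, k0)
  have hle' : Λ' (Fin.castSucc ⟨m0, hm0ℓ⟩) jF ≤ Λ' (Fin.succ ⟨m0, hm0ℓ⟩) kF := by
    rw [F1 (Fin.castSucc ⟨m0, hm0ℓ⟩) (le_refl m0) jF,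
      F2 (Fin.succ ⟨m0, hm0ℓ⟩) (Nat.lt_succ_self m0) kF, Equiv.swap_apply_right]
    exact (hext.2 ⟨m0, hm0ℓ⟩).1 jF
  have hviol' : Viol n ℓ c Λ' m0 k0 := ⟨hm0ℓ, hk0n, jF, hj0, hck0, hle'⟩
  have hbad' : IsBadTExt n ℓ μ c T Λ' :=
    ⟨hext', ⟨m0, hm0ℓ⟩, jF, kF, hjkF, by rw [hkFval]; exact hck0, hle'⟩
  have hb' : ∃ m kv, Viol n ℓ c Λ' m kv := ⟨m0, k0, hviol'⟩
  have hselM' : selM n ℓ c Λ' = m0 := by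
    refine selM_eq hb' m0 ⟨k0, hviol'⟩ ?_
    rintro m hm ⟨kv, hmℓ, hkn, j', e1, e2, e3⟩
    rw [F1 (Fin.castSucc ⟨m, hmℓ⟩) (le_of_lt hm) j',
      F1 (Fin.succ ⟨m, hmℓ⟩) hm ⟨kv, hkn⟩] at e3
    exact hmin m hm ⟨kv, hmℓ, hkn, j', e1, e2, e3⟩
  have hselK' : selK n ℓ c Λ' = k0 := by
    refine selK_eq hb' k0 (by rw [hselM']; exact hviol') ?_
    intro kv hkv hvv
    rw [hselM'] at hvv
    obtain ⟨hmℓ', hkn, j', e1, e2, e3⟩ := hvv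
    rw [F1 (Fin.castSucc ⟨m0, hmℓ'⟩) (le_refl m0) j',
      F2 (Fin.succ ⟨m0, hmℓ'⟩) (Nat.lt_succ_self m0) ⟨kv, hkn⟩,
      Equiv.swap_apply_of_ne_of_ne (Fin.ne_of_val_ne (by simp; omega))
        (Fin.ne_of_val_ne (by simp; omega))] at e3
    exact hmax kv hkv ⟨hmℓ', hkn, j', e1, e2, e3⟩
  exact ⟨m0, k0, hk0n, rfl, rfl, hk0pos, hm0ℓ, hbox', hbad', hselM', hselK'⟩

open Classical in
/-- the contributions of bad `T`-extensions to the alternating sum cancel. -/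
theorem stmt1 (n ℓ : ℕ) (μ : Fin n → ℕ) (hμ : ∀ i j : Fin n, i < j → μ j < μ i)
    (c T : Fin ℓ → ℕ) (hmono : ∀ h h' : Fin ℓ, h ≤ h' → c h ≤ c h')
    (hc1 : ∀ h, 1 ≤ c h) (hcn : ∀ h, c h ≤ n) :
    ∑ Λ ∈ (Fintype.piFinset fun _ : Fin (ℓ + 1) =>
        Fintype.piFinset fun i : Fin n => Finset.range (μ i + (∑ h, T h) + 1)).filter
        (fun Λ => IsBadTExt n ℓ μ c T Λ),
      ∑ σ : Equiv.Perm (Fin n),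
        (C (Equiv.Perm.sign σ : ℤ)) * ∏ i, X (σ i) ^ (Λ (Fin.last ℓ) i)
    = 0 := by
  classical
  set S := (Fintype.piFinset fun _ : Fin (ℓ + 1) =>
      Fintype.piFinset fun i : Fin n => Finset.range (μ i + (∑ h, T h) + 1)).filter
      (fun Λ => IsBadTExt n ℓ μ c T Λ) with hSdef
  rw [← Finset.sum_product']
  have hfacts : ∀ p : (Fin (ℓ + 1) → Fin n → ℕ) × Equiv.Perm (Fin n),
      p ∈ S ×ˢ (Finset.univ : Finset (Equiv.Perm (Fin n))) →
      (∀ g i, p.1 g i ≤ μ i + ∑ h, T h) ∧ IsBadTExt n ℓ μ c T p.1 := by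
    intro p hp
    have h1 := (Finset.mem_product.mp hp).1
    rw [hSdef, Finset.mem_filter] at h1
    refine ⟨?_, h1.2⟩
    intro g i
    have h2 := (Fintype.mem_piFinset.mp h1.1) g
    have h3 := (Fintype.mem_piFinset.mp h2) i
    rw [Finset.mem_range] at h3
    omega
  have hmain := fun p hp => main_key n ℓ μ hμ c T hmono p.1
    (hfacts p hp).1 (hfacts p hp).2
  have hKlt : ∀ p, ∀ hp : p ∈ S ×ˢ (Finset.univ : Finset (Equiv.Perm (Fin n))),
      0 < selK n ℓ c p.1 ∧ selK n ℓ c p.1 < n := by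
    intro p hp
    obtain ⟨m0, k0, hk0, hsM, hsK, hpos, _⟩ := hmain p hp
    rw [hsK]
    exact ⟨hpos, hk0⟩
  refine Finset.sum_involution
    (fun p hp => (FF n ℓ c p.1, p.2 * Equiv.swap
      ⟨selK n ℓ c p.1 - 1, Nat.lt_of_le_of_lt (Nat.sub_le _ _) (hKlt p hp).2⟩
      ⟨selK n ℓ c p.1, (hKlt p hp).2⟩)) ?_ ?_ ?_ ?_
  · -- cancellation
    intro p hp
    dsimp only
    obtain ⟨m0, k0, hk0, hsM, hsK, hpos, hm0ℓ, hbox', hbad', hsM', hsK'⟩ := hmain p hp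
    set jF : Fin n := ⟨k0 - 1, Nat.lt_of_le_of_lt (Nat.sub_le _ _) hk0⟩ with hjF
    set kF : Fin n := ⟨k0, hk0⟩ with hkF
    have hJ : (⟨selK n ℓ c p.1 - 1,
        Nat.lt_of_le_of_lt (Nat.sub_le _ _) (hKlt p hp).2⟩ : Fin n) = jF :=
      Fin.ext (by simp [hsK, hjF])
    have hK : (⟨selK n ℓ c p.1, (hKlt p hp).2⟩ : Fin n) = kF := Fin.ext (by simp [hsK, hkF])
    have hjFk : jF ≠ kF := Fin.ne_of_val_ne (by simp [hjF, hkF]; omega)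
    rw [hJ, hK, FF_eq n ℓ c p.1 hsM hsK hk0]
    have hlast : ∀ i, swapF n ℓ m0 k0 hk0 p.1 (Fin.last ℓ) i
        = p.1 (Fin.last ℓ) (Equiv.swap jF kF i) := by
      intro i
      simp only [swapF]
      rw [if_pos (by rw [Fin.val_last]; omega)]
    simp only [hlast]
    rw [show (∏ i, X ((p.2 * Equiv.swap jF kF) i)
          ^ p.1 (Fin.last ℓ) ((Equiv.swap jF kF) i) : MvPolynomial (Fin n) ℤ)
        = ∏ i, X (p.2 ((Equiv.swap jF kF) i)) ^ p.1 (Fin.last ℓ) ((Equiv.swap jF kF) i) from by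
        simp [Equiv.Perm.mul_apply],
      Equiv.prod_comp (Equiv.swap jF kF) (fun i => (X (p.2 i) ^ p.1 (Fin.last ℓ) i :
        MvPolynomial (Fin n) ℤ)),
      Equiv.Perm.sign_mul, Equiv.Perm.sign_swap hjFk,
      show ((Equiv.Perm.sign p.2 * -1 : ℤˣ) : ℤ) = -((Equiv.Perm.sign p.2 : ℤˣ) : ℤ) by
        push_cast; ring,
      map_neg]
    ring
  · -- not a fixed point
    intro p hp _
    intro heq
    have h2 := congrArg Prod.snd heq
    simp only at h2
    set J : Fin n := ⟨selK n ℓ c p.1 - 1,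
      Nat.lt_of_le_of_lt (Nat.sub_le _ _) (hKlt p hp).2⟩ with hJdef
    set K : Fin n := ⟨selK n ℓ c p.1, (hKlt p hp).2⟩ with hKdef
    have h3 : p.2 ((Equiv.swap J K) J) = p.2 J := by
      rw [← Equiv.Perm.mul_apply, h2]
    rw [Equiv.swap_apply_left] at h3
    have h4 : K = J := Equiv.injective p.2 h3
    have h5 : (K : ℕ) = (J : ℕ) := congrArg Fin.val h4
    have h6 : 0 < selK n ℓ c p.1 := (hKlt p hp).1
    simp only [hJdef, hKdef] at h5
    omega
  · -- membership
    intro p hp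
    obtain ⟨m0, k0, hk0, hsM, hsK, hpos, hm0ℓ, hbox', hbad', hsM', hsK'⟩ := hmain p hp
    rw [Finset.mem_product]
    refine ⟨?_, Finset.mem_univ _⟩
    show FF n ℓ c p.1 ∈ S
    rw [FF_eq n ℓ c p.1 hsM hsK hk0, hSdef, Finset.mem_filter]
    refine ⟨?_, hbad'⟩
    rw [Fintype.mem_piFinset]
    intro g
    rw [Fintype.mem_piFinset]
    intro i
    rw [Finset.mem_range]
    have := hbox' g i
    omega
  · -- involution
    intro p hp
    obtain ⟨m0, k0, hk0, hsM, hsK, hpos, hm0ℓ, hbox', hbad', hsM', hsK'⟩ := hmain p hp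
    have hFFp : FF n ℓ c p.1 = swapF n ℓ m0 k0 hk0 p.1 := FF_eq n ℓ c p.1 hsM hsK hk0
    have hsM'' : selM n ℓ c (FF n ℓ c p.1) = m0 := by rw [hFFp]; exact hsM'
    have hsK'' : selK n ℓ c (FF n ℓ c p.1) = k0 := by rw [hFFp]; exact hsK'
    have hk0b : selK n ℓ c (FF n ℓ c p.1) < n := by rw [hsK'']; exact hk0
    refine Prod.ext ?_ ?_
    · show FF n ℓ c (FF n ℓ c p.1) = p.1
      rw [FF_eq n ℓ c (FF n ℓ c p.1) hsM'' hsK'' hk0, hFFp, swapF_swapF]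
    · show (p.2 * Equiv.swap
          ⟨selK n ℓ c p.1 - 1, Nat.lt_of_le_of_lt (Nat.sub_le _ _) (hKlt p hp).2⟩
          ⟨selK n ℓ c p.1, (hKlt p hp).2⟩) * Equiv.swap
          ⟨selK n ℓ c (FF n ℓ c p.1) - 1, Nat.lt_of_le_of_lt (Nat.sub_le _ _) hk0b⟩
          ⟨selK n ℓ c (FF n ℓ c p.1), hk0b⟩ = p.2
      have hJ1 : (⟨selK n ℓ c (FF n ℓ c p.1) - 1,
          Nat.lt_of_le_of_lt (Nat.sub_le _ _) hk0b⟩ : Fin n)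
          = ⟨selK n ℓ c p.1 - 1, Nat.lt_of_le_of_lt (Nat.sub_le _ _) (hKlt p hp).2⟩ :=
        Fin.ext (by simp [hsK'', hsK])
      have hK1 : (⟨selK n ℓ c (FF n ℓ c p.1), hk0b⟩ : Fin n)
          = ⟨selK n ℓ c p.1, (hKlt p hp).2⟩ := Fin.ext (by simp [hsK'', hsK])
      rw [hJ1, hK1, mul_assoc, Equiv.swap_mul_self, mul_one]
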